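/- Let V satisfy Assumption (V) with exponent m > 0 and let (φ^t) be the Hamiltonian flow of p(x,ξ) = V(x) + |ξ|²/2, φ^t(ρ) = (x^t(ρ), ξ^t(ρ)). (i) If m < 1, then for every T ≥ 0 there exist C > 0 and E₀ > 0 such that for all E ≥ E₀, all r ≥ 0 and all ρ with p(ρ) = E: the Lebesgue measure of {t ∈ [0, T] : |x^t(ρ)| < r} is at most C·r/√E. (ii) If m ≥ 1, there exist C > 0 and E₀ > 0 such that for all E ≥ E₀, all T ≥ 0, all r ≥ 0 and all ρ with p(ρ) = E: the Lebesgue measure of {t ∈ [0, T] : |x^t(ρ)| < r} is at most C·r·(1 + T)/E^{1/(2m)}. -/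

import Mathlib

noncomputable section

open MeasureTheory

/-- The Japanese bracket `⟨x⟩ = (1 + |x|²)^{1/2}`. -/
def jap {E : Type*} [NormedAddCommGroup E] (x : E) : ℝ := Real.sqrt (1 + ‖x‖ ^ 2)

/-- `φ` is the (globally defined) Hamiltonian flow of `p(x,ξ) = V(x) + |ξ|²/2`. -/
def IsFlowV (d : ℕ) (V : EuclideanSpace ℝ (Fin d) → ℝ)
    (φ : ℝ → EuclideanSpace ℝ (Fin d) × EuclideanSpace ℝ (Fin d) →
      EuclideanSpace ℝ (Fin d) × EuclideanSpace ℝ (Fin d)) : Prop :=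
  (∀ ρ, φ 0 ρ = ρ) ∧ ∀ ρ t,
    HasDerivAt (fun s => (φ s ρ).1) ((φ t ρ).2) t ∧
    HasDerivAt (fun s => (φ s ρ).2) (-gradient V ((φ t ρ).1)) t

section Aux

open Set InnerProductSpace

variable {F : Type*} [NormedAddCommGroup F] [InnerProductSpace ℝ F] [CompleteSpace F]

lemma inner_gradient_eq (V : F → ℝ) (y w : F) :
    @inner ℝ _ _ (gradient V y) w = fderiv ℝ V y w := by
  rw [gradient, toDual_symm_apply]

lemma energy_const (V : F → ℝ) (hV : Differentiable ℝ V) (x ξ : ℝ → F)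
    (hx : ∀ t, HasDerivAt x (ξ t) t) (hξ : ∀ t, HasDerivAt ξ (-gradient V (x t)) t) :
    ∀ s t : ℝ, V (x s) + ‖ξ s‖ ^ 2 / 2 = V (x t) + ‖ξ t‖ ^ 2 / 2 := by
  have key : ∀ t : ℝ, HasDerivAt (fun s => V (x s) + ‖ξ s‖ ^ 2 / 2) 0 t := by
    intro t
    have h1 : HasDerivAt (fun s => V (x s)) (fderiv ℝ V (x t) (ξ t)) t :=
      (hV (x t)).hasFDerivAt.comp_hasDerivAt t (hx t)
    have h2 : HasDerivAt (fun s => @inner ℝ _ _ (ξ s) (ξ s))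
        (@inner ℝ _ _ (ξ t) (-gradient V (x t)) + @inner ℝ _ _ (-gradient V (x t)) (ξ t)) t :=
      (hξ t).inner ℝ (hξ t)
    have h2' : HasDerivAt (fun s => ‖ξ s‖ ^ 2 / 2)
        ((@inner ℝ _ _ (ξ t) (-gradient V (x t)) + @inner ℝ _ _ (-gradient V (x t)) (ξ t))/2) t := by
      have := h2.div_const 2
      simpa only [real_inner_self_eq_norm_sq] using this
    have := h1.add h2'
    refine this.congr_deriv ?_
    symm
    rw [← inner_gradient_eq V (x t) (ξ t)]
    simp only [inner_neg_left, inner_neg_right]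
    rw [real_inner_comm]
    ring
  intro s t
  exact is_const_of_deriv_eq_zero (fun u => ((key u).differentiableAt))
    (fun u => (key u).deriv) s t

lemma one_le_jap (x : F) : 1 ≤ jap x := by
  have := Real.sqrt_le_sqrt (show (1:ℝ) ≤ 1 + ‖x‖ ^ 2 from le_add_of_nonneg_right (by positivity))
  rwa [Real.sqrt_one] at this

lemma jap_pos (x : F) : 0 < jap x :=
  lt_of_lt_of_le one_pos (one_le_jap x)

lemma norm_le_jap (x : F) : ‖x‖ ≤ jap x := by
  have : ‖x‖ = Real.sqrt (‖x‖ ^ 2) := (Real.sqrt_sq (norm_nonneg x)).symm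
  rw [this]
  exact Real.sqrt_le_sqrt (by linarith)

lemma jap_rpow (x : F) (m : ℝ) :
    jap x ^ (2 * m) = (1 + ‖x‖ ^ 2) ^ m := by
  rw [jap, Real.sqrt_eq_rpow, ← Real.rpow_mul (by positivity)]
  congr 1
  ring

lemma jap_rpow_le (x : F) (m a : ℝ) (hm : 0 ≤ m)
    (hx : ‖x‖ ≤ a) : jap x ^ (2 * m) ≤ (1 + a ^ 2) ^ m := by
  rw [jap_rpow]
  exact Real.rpow_le_rpow (by positivity)
    (by nlinarith [norm_nonneg x]) hm

/-- strong convexity gap bound -/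
lemma sconv_gap (u u' u'' : ℝ → ℝ) (a b En r : ℝ) (hab : a ≤ b) (hEn : 0 < En)
    (hu : ∀ t ∈ Icc a b, HasDerivAt u (u' t) t)
    (hu' : ∀ t ∈ Icc a b, HasDerivAt u' (u'' t) t)
    (hlow : ∀ t ∈ Icc a b, 0 ≤ u t)
    (hcv : ∀ t ∈ Icc a b, En ≤ u'' t)
    (ha : u a < r ^ 2) (hb : u b < r ^ 2) : (b - a) ^ 2 ≤ 8 * r ^ 2 / En := by
  set w : ℝ → ℝ := fun t => u t - En * t ^ 2 / 2 with hw
  have hsub : interior (Icc a b) ⊆ Icc a b := interior_subset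
  have hw' : ∀ t ∈ interior (Icc a b),
      HasDerivWithinAt w (u' t - En * t) (interior (Icc a b)) t := by
    intro t ht
    exact ((hu t (hsub ht)).sub ((((hasDerivAt_pow 2 t).const_mul En).div_const 2).congr_deriv
      (by ring))).hasDerivWithinAt
  have hw'' : ∀ t ∈ interior (Icc a b),
      HasDerivWithinAt (fun t => u' t - En * t) (u'' t - En) (interior (Icc a b)) t := by
    intro t ht
    exact ((hu' t (hsub ht)).sub (((hasDerivAt_id t).const_mul En).congr_deriv
      (by ring))).hasDerivWithinAt
  have hconv : ConvexOn ℝ (Icc a b) w := by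
    refine convexOn_of_hasDerivWithinAt2_nonneg (convex_Icc a b) ?_ hw' hw'' ?_
    · intro t ht
      exact ((hu t ht).continuousAt.sub (by fun_prop)).continuousWithinAt
    · intro t ht
      have := hcv t (hsub ht); linarith
  have hmid := hconv.2 (left_mem_Icc.2 hab) (right_mem_Icc.2 hab)
    (by norm_num : (0:ℝ) ≤ 1/2) (by norm_num : (0:ℝ) ≤ 1/2) (by norm_num)
  have hmem : (1/2 : ℝ) • a + (1/2 : ℝ) • b ∈ Icc a b := by
    constructor <;> [skip; skip] <;> simp [smul_eq_mul] <;> linarith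
  have h0 := hlow _ hmem
  simp only [smul_eq_mul, hw] at hmid h0
  have key : En * (b - a) ^ 2 ≤ 8 * r ^ 2 := by nlinarith [hmid, h0, ha, hb]
  rw [le_div_iff₀ hEn]
  linarith [key]

/-- a set of reals of diameter ≤ ℓ has measure ≤ 2ℓ -/
lemma meas_of_diam (s : Set ℝ) (ℓ : ℝ)
    (h : ∀ a ∈ s, ∀ b ∈ s, |b - a| ≤ ℓ) : volume s ≤ ENNReal.ofReal (2 * ℓ) := by
  rcases s.eq_empty_or_nonempty with rfl | ⟨a, ha⟩
  · simp
  · have hsub : s ⊆ Icc (a - ℓ) (a + ℓ) := by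
      intro b hb
      have := h a ha b hb
      rw [abs_le] at this
      constructor <;> linarith [this.1, this.2]
    calc volume s ≤ volume (Icc (a - ℓ) (a + ℓ)) := measure_mono hsub
      _ = ENNReal.ofReal (2 * ℓ) := by rw [Real.volume_Icc]; ring_nf

lemma window_meas (u u' u'' : ℝ → ℝ) (En r a b : ℝ) (s : Set ℝ) (hEn : 0 < En) (hr : 0 ≤ r)
    (hs : s ⊆ Icc a b) (hsu : ∀ t ∈ s, u t < r ^ 2)
    (hu : ∀ t ∈ Icc a b, HasDerivAt u (u' t) t)
    (hu' : ∀ t ∈ Icc a b, HasDerivAt u' (u'' t) t)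
    (hlow : ∀ t ∈ Icc a b, 0 ≤ u t)
    (hcv : ∀ t ∈ Icc a b, En ≤ u'' t) :
    volume s ≤ ENNReal.ofReal (2 * (3 * r / Real.sqrt En)) := by
  apply meas_of_diam s _
  have key : ∀ p ∈ s, ∀ q ∈ s, p ≤ q → q - p ≤ 3 * r / Real.sqrt En := by
    intro p hp q hq hpq
    have hsub : Icc p q ⊆ Icc a b := Icc_subset_Icc (hs hp).1 (hs hq).2
    have h8 := sconv_gap u u' u'' p q En r hpq hEn (fun t ht => hu t (hsub ht))
      (fun t ht => hu' t (hsub ht)) (fun t ht => hlow t (hsub ht))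
      (fun t ht => hcv t (hsub ht)) (hsu p hp) (hsu q hq)
    have hsqEn : 0 < Real.sqrt En := Real.sqrt_pos.2 hEn
    have hsq : (q - p) ^ 2 ≤ (3 * r / Real.sqrt En) ^ 2 := by
      have he : (3 * r / Real.sqrt En) ^ 2 = 9 * r ^ 2 / En := by
        rw [div_pow, Real.sq_sqrt hEn.le]; ring
      rw [he]
      calc (q - p) ^ 2 ≤ 8 * r ^ 2 / En := h8
        _ ≤ 9 * r ^ 2 / En := by gcongr; nlinarith [sq_nonneg r]
    exact (pow_le_pow_iff_left₀ (by linarith) (by positivity) two_ne_zero).1 hsq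
  intro p hp q hq
  rcases le_total p q with h | h
  · rw [abs_of_nonneg (by linarith)]; exact key p hp q hq h
  · rw [abs_of_nonpos (by linarith)]
    have := key q hq p hp h; linarith

end Aux

section Core
open Set InnerProductSpace
open scoped ENNReal NNReal

set_option maxHeartbeats 2000000 in
lemma traj_bound (d : ℕ) (m : ℝ) (hm : 0 < m)
    (V : EuclideanSpace ℝ (Fin d) → ℝ) (hVsmooth : ContDiff ℝ (⊤ : ℕ∞) V)
    (hVell : ∃ C : ℝ, 1 ≤ C ∧ ∃ r₀ > 0, ∀ x, r₀ ≤ ‖x‖ →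
      C⁻¹ * jap x ^ (2 * m) ≤ V x ∧ V x ≤ C * jap x ^ (2 * m))
    (hVder : ∀ k : ℕ, ∃ Ck > 0, ∀ x,
      ‖iteratedFDeriv ℝ k V x‖ ≤ Ck * jap x ^ (2 * m - k)) :
    ∃ K : ℝ, 1 ≤ K ∧ ∃ E₀ : ℝ, 1 ≤ E₀ ∧ ∀ E : ℝ, E₀ ≤ E → ∀ T : ℝ, 0 ≤ T → ∀ r : ℝ, 0 ≤ r →
      ∀ x ξ : ℝ → EuclideanSpace ℝ (Fin d),
        (∀ t, HasDerivAt x (ξ t) t) → (∀ t, HasDerivAt ξ (-gradient V (x t)) t) →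
        V (x 0) + ‖ξ 0‖ ^ 2 / 2 = E →
        volume {t : ℝ | t ∈ Set.Icc 0 T ∧ ‖x t‖ < r}
          ≤ ENNReal.ofReal (K * r / Real.sqrt E + K * r * (1 + T) / E ^ (1 / (2 * m))) := by
  classical
  obtain ⟨C, hC1, r₀, hr₀, hell⟩ := hVell
  obtain ⟨C₁, hC₁pos, hd1⟩ := hVder 1
  have hCpos : (0:ℝ) < C := lt_of_lt_of_le one_pos hC1
  -- bound of V on the ball of radius r₀
  obtain ⟨B₀, hB₀⟩ := (isCompact_closedBall (0 : EuclideanSpace ℝ (Fin d)) r₀).exists_bound_of_continuousOn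
    hVsmooth.continuous.continuousOn
  set B := max B₀ 0 with hBdef
  have hB : 0 ≤ B := le_max_right _ _
  have hVlow : ∀ y, -B ≤ V y := by
    intro y
    by_cases hy : ‖y‖ ≤ r₀
    · have := hB₀ y (by simpa [Metric.mem_closedBall, dist_eq_norm] using hy)
      have h2 := neg_abs_le (V y)
      have h3 : B₀ ≤ B := le_max_left _ _
      rw [Real.norm_eq_abs] at this
      linarith
    · push_neg at hy
      have := (hell y hy.le).1
      have h4 : 0 ≤ C⁻¹ * jap y ^ (2*m) := mul_nonneg (inv_nonneg.2 hCpos.le) (Real.rpow_nonneg (jap_pos y).le _)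
      linarith
  have hVupp : ∀ y (a : ℝ), ‖y‖ ≤ a → V y ≤ C * (1 + a ^ 2) ^ m + B := by
    intro y a hya
    by_cases hy : ‖y‖ ≤ r₀
    · have := hB₀ y (by simpa [Metric.mem_closedBall, dist_eq_norm] using hy)
      rw [Real.norm_eq_abs] at this
      have h2 := le_abs_self (V y)
      have h3 : B₀ ≤ B := le_max_left _ _
      have h4 : 0 ≤ C * (1 + a ^ 2) ^ m := by positivity
      linarith
    · push_neg at hy
      have h1 := (hell y hy.le).2
      have h2 : jap y ^ (2*m) ≤ (1 + a ^ 2) ^ m := jap_rpow_le y m a hm.le hya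
      nlinarith
  -- the fderiv bound
  have hfd : ∀ (y v : EuclideanSpace ℝ (Fin d)), |fderiv ℝ V y v| ≤ C₁ * jap y ^ (2*m-1) * ‖v‖ := by
    intro y v
    have h1 : fderiv ℝ V y v = iteratedFDeriv ℝ 1 V y ![v] := by
      rw [iteratedFDeriv_one_apply]; simp
    rw [h1]
    calc |iteratedFDeriv ℝ 1 V y ![v]| = ‖iteratedFDeriv ℝ 1 V y ![v]‖ := (Real.norm_eq_abs _).symm
      _ ≤ ‖iteratedFDeriv ℝ 1 V y‖ * ∏ i, ‖(![v] : Fin 1 → EuclideanSpace ℝ (Fin d)) i‖ :=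
          ContinuousMultilinearMap.le_opNorm _ _
      _ = ‖iteratedFDeriv ℝ 1 V y‖ * ‖v‖ := by simp
      _ ≤ C₁ * jap y ^ (2*m-1) * ‖v‖ := by
          apply mul_le_mul_of_nonneg_right _ (norm_nonneg v)
          simpa using hd1 y
  -- constants
  set K₅ : ℝ := max 1 ((2 ^ m * (4*C + 2*C₁)) ^ (1/(2*m))) with hK₅def
  have hK₅1 : 1 ≤ K₅ := le_max_left _ _
  have hK₅pos : 0 < K₅ := by linarith
  have hbase : (0:ℝ) ≤ 2 ^ m * (4*C + 2*C₁) :=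
    mul_nonneg (le_of_lt (Real.rpow_pos_of_pos two_pos m)) (by linarith)
  have hK₅pow : 2 ^ m * (4*C + 2*C₁) ≤ K₅ ^ (2*m) := by
    have h1 : ((2:ℝ) ^ m * (4*C + 2*C₁)) ^ (1/(2*m)) ≤ K₅ := le_max_right _ _
    calc 2 ^ m * (4*C + 2*C₁)
        = (((2:ℝ) ^ m * (4*C + 2*C₁)) ^ (1/(2*m))) ^ (2*m) := by
          rw [← Real.rpow_mul hbase, one_div, inv_mul_cancel₀ (by positivity : (2*m) ≠ 0), Real.rpow_one]
      _ ≤ K₅ ^ (2*m) := Real.rpow_le_rpow (Real.rpow_nonneg hbase _) h1 (by positivity)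
  have hK₅2m_pos : 0 < K₅ ^ (2*m) := Real.rpow_pos_of_pos hK₅pos _
  set E₀ : ℝ := 4*B + K₅ ^ (2*m) + 1 with hE₀def
  have hE₀1 : 1 ≤ E₀ := by simp only [hE₀def]; linarith
  refine ⟨24*K₅ + 6, by linarith, E₀, hE₀1, ?_⟩
  intro E hE T hT r hr x ξ hx hξ hen
  have hE1 : 1 ≤ E := le_trans hE₀1 hE
  have hEpos : 0 < E := by linarith
  have hE4B : 4*B ≤ E := by simp only [hE₀def] at hE; linarith
  have hEK₅ : K₅ ^ (2*m) ≤ E := by simp only [hE₀def] at hE; linarith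
  have hsqEpos : 0 < Real.sqrt E := Real.sqrt_pos.2 hEpos
  have hsqE2 : (Real.sqrt E) ^ 2 = E := Real.sq_sqrt hEpos.le
  -- conservation of energy
  have hcons : ∀ t, V (x t) + ‖ξ t‖ ^ 2 / 2 = E := by
    intro t
    have := energy_const V (hVsmooth.differentiable (by simp)) x ξ hx hξ t 0
    rw [this, hen]
  -- speed bound
  have hspeed : ∀ t, ‖ξ t‖ ≤ 2 * Real.sqrt E := by
    intro t
    have h1 : ‖ξ t‖ ^ 2 = 2*(E - V (x t)) := by have := hcons t; linarith
    have h2 : ‖ξ t‖ ^ 2 ≤ (2 * Real.sqrt E) ^ 2 := by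
      rw [mul_pow, hsqE2]
      have := hVlow (x t)
      nlinarith
    exact (pow_le_pow_iff_left₀ (norm_nonneg _) (by positivity) two_ne_zero).1 h2
  -- the radius R
  set A : ℝ := E ^ (1/(2*m)) with hAdef
  have hApos : 0 < A := Real.rpow_pos_of_pos hEpos _
  have hA2m : A ^ (2*m) = E := by
    rw [hAdef, ← Real.rpow_mul hEpos.le, one_div, inv_mul_cancel₀ (by positivity : (2*m) ≠ 0),
      Real.rpow_one]
  have hAK₅ : K₅ ≤ A := by
    have h1 : (K₅ ^ (2*m)) ^ (1/(2*m)) ≤ E ^ (1/(2*m)) :=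
      Real.rpow_le_rpow hK₅2m_pos.le hEK₅ (by positivity)
    rwa [← Real.rpow_mul hK₅pos.le, mul_one_div, div_self (by positivity : (2*m) ≠ 0),
      Real.rpow_one] at h1
  have hA1 : 1 ≤ A := le_trans hK₅1 hAK₅
  set R : ℝ := A / K₅ with hRdef
  have hRpos : 0 < R := by positivity
  have hR1 : 1 ≤ R := (one_le_div hK₅pos).2 hAK₅
  have hRA : R ≤ A := div_le_self hApos.le hK₅1
  -- the second derivative bound inside the ball of radius R
  have hball : ∀ t, ‖x t‖ ≤ R → E ≤ 2*‖ξ t‖^2 - 2*(fderiv ℝ V (x t) (x t)) := by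
    intro t hxt
    have h1 : V (x t) ≤ C * (1 + R ^ 2) ^ m + B := hVupp _ _ hxt
    have h2 : ‖ξ t‖ ^ 2 = 2*(E - V (x t)) := by have := hcons t; linarith
    have hjr : jap (x t) ^ (2*m) ≤ (1 + R ^ 2) ^ m := jap_rpow_le (x t) m R hm.le hxt
    have h3 : |fderiv ℝ V (x t) (x t)| ≤ C₁ * (1 + R ^ 2) ^ m := by
      have hjpos := jap_pos (x t)
      have hstep : jap (x t) ^ (2*m-1) * ‖x t‖ ≤ jap (x t) ^ (2*m) := by
        have hmm : jap (x t) ^ (2*m-1) * ‖x t‖ ≤ jap (x t) ^ (2*m-1) * jap (x t) :=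
          mul_le_mul_of_nonneg_left (norm_le_jap _) (Real.rpow_nonneg hjpos.le _)
        have heq : jap (x t) ^ (2*m-1) * jap (x t) = jap (x t) ^ (2*m) := by
          rw [← Real.rpow_add_one (ne_of_gt hjpos) (2*m-1)]
          congr 1
          ring
        linarith
      calc |fderiv ℝ V (x t) (x t)| ≤ C₁ * jap (x t) ^ (2*m-1) * ‖x t‖ := hfd _ _
        _ = C₁ * (jap (x t) ^ (2*m-1) * ‖x t‖) := by ring
        _ ≤ C₁ * (jap (x t) ^ (2*m)) := mul_le_mul_of_nonneg_left hstep hC₁pos.le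
        _ ≤ C₁ * (1 + R ^ 2) ^ m := mul_le_mul_of_nonneg_left hjr hC₁pos.le
    have h4 : (1 + R ^ 2) ^ m ≤ 2 ^ m * E / K₅ ^ (2*m) := by
      have h5 : (1 + R ^ 2 : ℝ) ≤ 2*R^2 := by nlinarith
      have h6 : ((1:ℝ) + R ^ 2) ^ m ≤ ((2:ℝ)*R^2) ^ m :=
        Real.rpow_le_rpow (by positivity) h5 hm.le
      have h7 : ((2:ℝ)*R^2) ^ m = 2 ^ m * R ^ (2*m) := by
        rw [Real.mul_rpow (by norm_num) (by positivity)]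
        congr 1
        rw [← Real.rpow_natCast R 2, ← Real.rpow_mul hRpos.le]
        norm_num
      have h8 : R ^ (2*m) = E / K₅ ^ (2*m) := by
        rw [hRdef, Real.div_rpow hApos.le hK₅pos.le, hA2m]
      rw [h7, h8, ← mul_div_assoc] at h6
      linarith [h6]
    have hY : (4*C + 2*C₁) * (2 ^ m * E / K₅ ^ (2*m)) ≤ E := by
      have h9 : (4*C + 2*C₁) * (2 ^ m * E / K₅ ^ (2*m))
          = 2 ^ m * (4*C + 2*C₁) * E / K₅ ^ (2*m) := by ring
      rw [h9, div_le_iff₀ hK₅2m_pos]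
      calc 2 ^ m * (4*C + 2*C₁) * E ≤ K₅ ^ (2*m) * E :=
            mul_le_mul_of_nonneg_right hK₅pow hEpos.le
        _ = E * K₅ ^ (2*m) := mul_comm _ _
    have p1 : C * (1 + R ^ 2) ^ m ≤ C * (2 ^ m * E / K₅ ^ (2*m)) :=
      mul_le_mul_of_nonneg_left h4 hCpos.le
    have p2 : C₁ * (1 + R ^ 2) ^ m ≤ C₁ * (2 ^ m * E / K₅ ^ (2*m)) :=
      mul_le_mul_of_nonneg_left h4 hC₁pos.le
    have hY' : 4*(C * (2 ^ m * E / K₅ ^ (2*m))) + 2*(C₁ * (2 ^ m * E / K₅ ^ (2*m))) ≤ E := by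
      have h10 : 4*(C * (2 ^ m * E / K₅ ^ (2*m))) + 2*(C₁ * (2 ^ m * E / K₅ ^ (2*m)))
          = (4*C + 2*C₁) * (2 ^ m * E / K₅ ^ (2*m)) := by ring
      linarith [hY]
    have habs := (abs_le.1 h3).2
    linarith [h1, h2, habs, p1, p2, hY', hE4B]
  -- derivatives of u = ‖x t‖²
  have hu : ∀ t : ℝ, HasDerivAt (fun s => ‖x s‖^2) (2 * @inner ℝ _ _ (x t) (ξ t)) t := by
    intro t
    have h := (hx t).inner ℝ (hx t)
    have h2 : HasDerivAt (fun s => @inner ℝ _ _ (x s) (x s)) (2 * @inner ℝ _ _ (x t) (ξ t)) t := by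
      refine h.congr_deriv ?_
      rw [real_inner_comm (ξ t) (x t)]; ring
    have h3 : (fun s => @inner ℝ _ _ (x s) (x s)) = fun s => ‖x s‖^2 :=
      funext fun s => real_inner_self_eq_norm_sq _
    rwa [h3] at h2
  have hu' : ∀ t : ℝ, HasDerivAt (fun s => 2 * @inner ℝ _ _ (x s) (ξ s))
      (2*‖ξ t‖^2 - 2*(fderiv ℝ V (x t) (x t))) t := by
    intro t
    have h := (hx t).inner ℝ (hξ t)
    have h2 := h.const_mul 2
    refine h2.congr_deriv ?_
    have hg : @inner ℝ _ _ (x t) (gradient V (x t)) = fderiv ℝ V (x t) (x t) := by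
      rw [real_inner_comm]
      exact inner_gradient_eq V (x t) (x t)
    rw [inner_neg_right, hg, real_inner_self_eq_norm_sq]
    ring
  -- the time window
  set τ : ℝ := R / (4 * Real.sqrt E) with hτdef
  have hτpos : 0 < τ := by rw [hτdef]; exact div_pos hRpos (by positivity)
  set S := {t : ℝ | t ∈ Icc 0 T ∧ ‖x t‖ < r} with hSdef
  rcases le_or_gt r (R/2) with hcase | hcase
  · -- small r
    set N : ℕ := Nat.floor (T/τ) + 1 with hNdef
    have hcover : S ⊆ ⋃ k ∈ Finset.range N, (S ∩ Icc ((k:ℝ)*τ) (((k:ℝ)+1)*τ)) := by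
      intro t ht
      have ht' := ht
      rw [hSdef] at ht
      obtain ⟨⟨ht0, htT⟩, htr⟩ := ht
      have hk : Nat.floor (t/τ) ∈ Finset.range N := by
        rw [Finset.mem_range, hNdef]
        exact Nat.lt_succ_of_le (Nat.floor_le_floor ((div_le_div_iff_of_pos_right hτpos).2 htT))
      refine Set.mem_biUnion hk ⟨ht', ?_, ?_⟩
      · have h1 : (Nat.floor (t/τ) : ℝ) ≤ t/τ := Nat.floor_le (div_nonneg ht0 hτpos.le)
        calc (Nat.floor (t/τ) : ℝ) * τ ≤ (t/τ) * τ := mul_le_mul_of_nonneg_right h1 hτpos.le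
          _ = t := by field_simp
      · have h2 : t/τ < Nat.floor (t/τ) + 1 := Nat.lt_floor_add_one _
        have h3 := mul_lt_mul_of_pos_right h2 hτpos
        have ht3 : t = (t/τ)*τ := by field_simp
        nlinarith [h3]
    have hwin : ∀ k : ℕ, volume (S ∩ Icc ((k:ℝ)*τ) (((k:ℝ)+1)*τ))
        ≤ ENNReal.ofReal (2*(3*r/Real.sqrt E)) := by
      intro k
      rcases (S ∩ Icc ((k:ℝ)*τ) (((k:ℝ)+1)*τ)).eq_empty_or_nonempty with hemp | ⟨t₀, ht₀⟩
      · rw [hemp]; simp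
      · have ht₀S : t₀ ∈ S := ht₀.1
        have ht₀I : t₀ ∈ Icc ((k:ℝ)*τ) (((k:ℝ)+1)*τ) := ht₀.2
        have hIball : ∀ t ∈ Icc ((k:ℝ)*τ) (((k:ℝ)+1)*τ), ‖x t‖ ≤ R := by
          intro t ht
          have hlip : ‖x t - x t₀‖ ≤ (2*Real.sqrt E) * ‖t - t₀‖ :=
            (convex_Icc ((k:ℝ)*τ) (((k:ℝ)+1)*τ)).norm_image_sub_le_of_norm_hasDerivWithin_le
              (fun s _ => (hx s).hasDerivWithinAt) (fun s _ => hspeed s) ht₀I ht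
          have hdt : ‖t - t₀‖ ≤ τ := by
            rw [Real.norm_eq_abs, abs_le]
            constructor
            · linarith [ht.1, ht₀I.2]
            · linarith [ht.2, ht₀I.1]
          have h2 : (2*Real.sqrt E) * ‖t - t₀‖ ≤ (2*Real.sqrt E) * τ :=
            mul_le_mul_of_nonneg_left hdt (by positivity)
          have h3 : (2*Real.sqrt E) * τ = R/2 := by
            rw [hτdef]; field_simp; ring
          have h4 := norm_sub_norm_le (x t) (x t₀)
          have h5 : ‖x t₀‖ < r := ht₀S.2
          linarith [hlip, h2, h4, h5, hcase]
        refine window_meas (fun s => ‖x s‖^2) (fun s => 2 * @inner ℝ _ _ (x s) (ξ s))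
          (fun s => 2*‖ξ s‖^2 - 2*(fderiv ℝ V (x s) (x s))) E r ((k:ℝ)*τ) (((k:ℝ)+1)*τ) _
          hEpos hr Set.inter_subset_right ?_ (fun t _ => hu t) (fun t _ => hu' t)
          (fun t _ => by positivity) (fun t ht => hball t (hIball t ht))
        intro t ht
        have h6 : ‖x t‖ < r := ht.1.2
        show ‖x t‖^2 < r^2
        exact pow_lt_pow_left₀ h6 (norm_nonneg _) two_ne_zero
    have hsum : volume S ≤ (N : ℝ≥0∞) * ENNReal.ofReal (2*(3*r/Real.sqrt E)) := by
      calc volume S ≤ volume (⋃ k ∈ Finset.range N, (S ∩ Icc ((k:ℝ)*τ) (((k:ℝ)+1)*τ))) :=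
            measure_mono hcover
        _ ≤ ∑ k ∈ Finset.range N, volume (S ∩ Icc ((k:ℝ)*τ) (((k:ℝ)+1)*τ)) :=
            measure_biUnion_finset_le _ _
        _ ≤ ∑ k ∈ Finset.range N, ENNReal.ofReal (2*(3*r/Real.sqrt E)) :=
            Finset.sum_le_sum (fun k _ => hwin k)
        _ = (N:ℝ≥0∞) * ENNReal.ofReal (2*(3*r/Real.sqrt E)) := by
            rw [Finset.sum_const, Finset.card_range, nsmul_eq_mul]
    have hNle : (N:ℝ) ≤ T/τ + 1 := by
      rw [hNdef]; push_cast
      have := Nat.floor_le (show 0 ≤ T/τ from div_nonneg hT hτpos.le)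
      linarith
    have hfin : volume S ≤ ENNReal.ofReal ((T/τ + 1) * (2*(3*r/Real.sqrt E))) := by
      refine le_trans hsum ?_
      rw [ENNReal.ofReal_mul (by positivity : (0:ℝ) ≤ T/τ + 1)]
      refine mul_le_mul' ?_ le_rfl
      rw [← ENNReal.ofReal_natCast N]
      exact ENNReal.ofReal_le_ofReal hNle
    refine le_trans hfin (ENNReal.ofReal_le_ofReal ?_)
    have e1 : (T/τ + 1) * (2*(3*r/Real.sqrt E)) = 6*r/Real.sqrt E + 24*K₅*(r*T)/A := by
      rw [hτdef, hRdef]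
      field_simp
      ring
    rw [e1]
    have q1 : 6*r/Real.sqrt E ≤ (24*K₅+6)*r/Real.sqrt E := by
      apply (div_le_div_iff_of_pos_right hsqEpos).2
      nlinarith [hr, hK₅1]
    have q2 : 24*K₅*(r*T)/A ≤ (24*K₅+6)*r*(1+T)/A := by
      apply (div_le_div_iff_of_pos_right hApos).2
      nlinarith [mul_nonneg hK₅pos.le hr, mul_nonneg hr hT,
        mul_nonneg (mul_nonneg hK₅pos.le hr) hT, hK₅1]
    linarith [q1, q2]
  · -- large r
    have hsub : S ⊆ Icc 0 T := fun t ht => ht.1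
    have h1 : volume S ≤ ENNReal.ofReal T := by
      calc volume S ≤ volume (Icc 0 T) := measure_mono hsub
        _ = ENNReal.ofReal T := by rw [Real.volume_Icc, sub_zero]
    refine le_trans h1 (ENNReal.ofReal_le_ofReal ?_)
    have h2 : A < 2*K₅*r := by
      rw [hRdef] at hcase
      have : A = 2*K₅*(A/K₅/2) := by field_simp
      rw [this]
      exact mul_lt_mul_of_pos_left hcase (by positivity)
    have h3 : T ≤ (24*K₅+6)*r*(1+T)/A := by
      rw [le_div_iff₀ hApos]
      have i1 : T*A ≤ T*(2*K₅*r) := mul_le_mul_of_nonneg_left h2.le hT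
      nlinarith [hr, hT, hK₅1, i1, mul_nonneg hr hT, mul_nonneg (mul_nonneg hK₅pos.le hr) hT]
    have h4 : 0 ≤ (24*K₅+6)*r/Real.sqrt E := by positivity
    linarith [h3, h4]


end Core

theorem stmt_4 (d : ℕ) (m : ℝ) (hm : 0 < m)
    (V : EuclideanSpace ℝ (Fin d) → ℝ) (hVsmooth : ContDiff ℝ (⊤ : ℕ∞) V)
    (hVell : ∃ C : ℝ, 1 ≤ C ∧ ∃ r₀ > 0, ∀ x, r₀ ≤ ‖x‖ →
      C⁻¹ * jap x ^ (2 * m) ≤ V x ∧ V x ≤ C * jap x ^ (2 * m))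
    (hVder : ∀ k : ℕ, ∃ Ck > 0, ∀ x,
      ‖iteratedFDeriv ℝ k V x‖ ≤ Ck * jap x ^ (2 * m - k))
    (φ : ℝ → EuclideanSpace ℝ (Fin d) × EuclideanSpace ℝ (Fin d) →
      EuclideanSpace ℝ (Fin d) × EuclideanSpace ℝ (Fin d))
    (hφ : IsFlowV d V φ) :
    (m < 1 → ∀ T : ℝ, 0 ≤ T → ∃ C > 0, ∃ E₀ > 0, ∀ E : ℝ, E₀ ≤ E → ∀ r : ℝ, 0 ≤ r →
      ∀ ρ : EuclideanSpace ℝ (Fin d) × EuclideanSpace ℝ (Fin d),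
        V ρ.1 + ‖ρ.2‖ ^ 2 / 2 = E →
        volume {t : ℝ | t ∈ Set.Icc 0 T ∧ ‖(φ t ρ).1‖ < r}
          ≤ ENNReal.ofReal (C * r / Real.sqrt E)) ∧
    (1 ≤ m → ∃ C > 0, ∃ E₀ > 0, ∀ E : ℝ, E₀ ≤ E → ∀ T : ℝ, 0 ≤ T → ∀ r : ℝ, 0 ≤ r →
      ∀ ρ : EuclideanSpace ℝ (Fin d) × EuclideanSpace ℝ (Fin d),
        V ρ.1 + ‖ρ.2‖ ^ 2 / 2 = E →
        volume {t : ℝ | t ∈ Set.Icc 0 T ∧ ‖(φ t ρ).1‖ < r}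
          ≤ ENNReal.ofReal (C * r * (1 + T) / E ^ (1 / (2 * m)))) := by
  obtain ⟨hφ1, hφ2⟩ := hφ
  obtain ⟨K, hK1, E₀, hE₀1, hbound⟩ := traj_bound d m hm V hVsmooth hVell hVder
  constructor
  · -- m < 1
    intro hm1 T hT
    refine ⟨K*(2+T), by nlinarith, E₀, by linarith, ?_⟩
    intro E hE r hr ρ hρ
    have hb := hbound E hE T hT r hr (fun t => (φ t ρ).1) (fun t => (φ t ρ).2)
      (fun t => (hφ2 ρ t).1) (fun t => (hφ2 ρ t).2) (by show V (φ 0 ρ).1 + ‖(φ 0 ρ).2‖ ^ 2 / 2 = E; rw [hφ1 ρ]; exact hρ)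
    refine le_trans hb (ENNReal.ofReal_le_ofReal ?_)
    have hE1 : 1 ≤ E := le_trans hE₀1 hE
    have hsqEpos : 0 < Real.sqrt E := Real.sqrt_pos.2 (by linarith)
    have hApos : 0 < E ^ (1/(2*m)) := Real.rpow_pos_of_pos (by linarith) _
    have hexp : (1:ℝ)/2 ≤ 1/(2*m) := by
      rw [div_le_div_iff₀ (by norm_num) (by positivity)]
      nlinarith
    have hAle : Real.sqrt E ≤ E ^ (1/(2*m)) := by
      rw [Real.sqrt_eq_rpow]
      exact Real.rpow_le_rpow_of_exponent_le hE1 hexp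
    have h1 : K*r*(1+T)/E ^ (1/(2*m)) ≤ K*r*(1+T)/Real.sqrt E := by
      apply div_le_div_of_nonneg_left ?_ hsqEpos hAle
      positivity
    have h2 : K*r/Real.sqrt E + K*r*(1+T)/Real.sqrt E = K*(2+T)*r/Real.sqrt E := by
      field_simp
      ring
    linarith [h1, h2]
  · -- 1 ≤ m
    intro hm1
    refine ⟨2*K, by linarith, E₀, by linarith, ?_⟩
    intro E hE T hT r hr ρ hρ
    have hb := hbound E hE T hT r hr (fun t => (φ t ρ).1) (fun t => (φ t ρ).2)
      (fun t => (hφ2 ρ t).1) (fun t => (hφ2 ρ t).2) (by show V (φ 0 ρ).1 + ‖(φ 0 ρ).2‖ ^ 2 / 2 = E; rw [hφ1 ρ]; exact hρ)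
    refine le_trans hb (ENNReal.ofReal_le_ofReal ?_)
    have hE1 : 1 ≤ E := le_trans hE₀1 hE
    have hsqEpos : 0 < Real.sqrt E := Real.sqrt_pos.2 (by linarith)
    have hApos : 0 < E ^ (1/(2*m)) := Real.rpow_pos_of_pos (by linarith) _
    have hexp : (1:ℝ)/(2*m) ≤ 1/2 := by
      rw [div_le_div_iff₀ (by positivity) (by norm_num)]
      nlinarith
    have hAle : E ^ (1/(2*m)) ≤ Real.sqrt E := by
      rw [Real.sqrt_eq_rpow]
      exact Real.rpow_le_rpow_of_exponent_le hE1 hexp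
    have h1 : K*r/Real.sqrt E ≤ K*r/E ^ (1/(2*m)) := by
      apply div_le_div_of_nonneg_left ?_ hApos hAle
      positivity
    have h2 : K*r/E ^ (1/(2*m)) ≤ K*r*(1+T)/E ^ (1/(2*m)) := by
      apply (div_le_div_iff_of_pos_right hApos).2
      nlinarith [mul_nonneg (mul_nonneg (le_trans zero_le_one hK1) hr) hT]
    have h3 : K*r*(1+T)/E ^ (1/(2*m)) + K*r*(1+T)/E ^ (1/(2*m)) = 2*K*r*(1+T)/E ^ (1/(2*m)) := by
      ring
    linarith [h1, h2, h3]


end
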